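/- A tropical linear differential equation P = min_{0≤i≤k}{a_i + u^(i)} (with a_0,...,a_k ∈ ℤ, k ≥ 1) has no nonempty tropical solution if and only if a_i - i > a_0 for all 1 ≤ i ≤ k. -/

import Mathlib

/-- `tval S i` = min { s - i : s ∈ S, s ≥ i }, as an extended real (⊤ if no such s). -/
noncomputable def tval (S : Set ℕ) (i : ℕ) : EReal :=
  ⨅ (d : ℕ) (_ : i + d ∈ S), ((d : ℝ) : EReal)

/-- The term `a_i + val_S(i)` of the tropical linear differential equation. -/
noncomputable def tterm (a : ℕ → ℤ) (S : Set ℕ) (i : ℕ) : EReal :=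
  ((a i : ℝ) : EReal) + tval S i

/-- `min_{0 ≤ i ≤ k} { a_i + val_S(i) }`. -/
noncomputable def tmin (k : ℕ) (a : ℕ → ℤ) (S : Set ℕ) : EReal :=
  ⨅ i ∈ Finset.range (k + 1), tterm a S i

/-- `S` is a tropical solution: the minimum is attained at least twice
(this also covers the case where the minimum is `∞`, since `k ≥ 1`). -/
def IsSol (k : ℕ) (a : ℕ → ℤ) (S : Set ℕ) : Prop :=
  ∃ i ∈ Finset.range (k + 1), ∃ j ∈ Finset.range (k + 1),
    i ≠ j ∧ tterm a S i = tmin k a S ∧ tterm a S j = tmin k a S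

/-- A minimal tropical solution: nonempty, a solution, and no nonempty proper
subset is a solution. -/
def IsMinSol (k : ℕ) (a : ℕ → ℤ) (S : Set ℕ) : Prop :=
  S.Nonempty ∧ IsSol k a S ∧ ∀ T ⊆ S, T.Nonempty → IsSol k a T → T = S

lemma tval_le_of_mem {S : Set ℕ} {i d : ℕ} (h : i + d ∈ S) :
    tval S i ≤ ((d : ℝ) : EReal) := by
  unfold tval; exact (iInf_le _ d).trans (iInf_le _ h)

lemma le_tval {S : Set ℕ} {i : ℕ} {c : ℝ} (h : ∀ d : ℕ, i + d ∈ S → c ≤ (d : ℝ)) :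
    ((c : ℝ) : EReal) ≤ tval S i :=
  le_iInf₂ fun d hd => EReal.coe_le_coe_iff.mpr (h d hd)

lemma tval_eq {S : Set ℕ} {i d0 : ℕ} (hmem : i + d0 ∈ S)
    (hmin : ∀ d : ℕ, i + d ∈ S → d0 ≤ d) : tval S i = ((d0 : ℝ) : EReal) :=
  le_antisymm (tval_le_of_mem hmem)
    (le_tval fun d hd => by exact_mod_cast hmin d hd)

lemma tval_top {S : Set ℕ} {i : ℕ} (h : ∀ d : ℕ, i + d ∉ S) : tval S i = ⊤ := by
  simp [tval, h]

lemma tterm_eq (a : ℕ → ℤ) {S : Set ℕ} {i d0 : ℕ} (h : tval S i = ((d0 : ℝ) : EReal)) :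
    tterm a S i = (((a i : ℝ) + (d0 : ℝ) : ℝ) : EReal) := by
  rw [tterm, h, ← EReal.coe_add]

lemma tterm_top (a : ℕ → ℤ) {S : Set ℕ} {i : ℕ} (h : tval S i = ⊤) :
    tterm a S i = ⊤ := by
  rw [tterm, h]; exact EReal.add_top_of_ne_bot (by simp)

lemma tmin_eq (a : ℕ → ℤ) {k : ℕ} {S : Set ℕ} {c : EReal} (h0 : tterm a S 0 = c)
    (hall : ∀ i, i ≤ k → c ≤ tterm a S i) : tmin k a S = c := by
  apply le_antisymm
  · exact h0 ▸ iInf₂_le 0 (Finset.mem_range.mpr (Nat.succ_pos k))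
  · exact le_iInf₂ fun i hi => hall i (Nat.lt_succ_iff.mp (Finset.mem_range.mp hi))

lemma isSol_of (a : ℕ → ℤ) {k : ℕ} {S : Set ℕ} {c : EReal}
    (h0 : tterm a S 0 = c) (hall : ∀ i, i ≤ k → c ≤ tterm a S i)
    {t : ℕ} (ht1 : 1 ≤ t) (htk : t ≤ k) (htt : tterm a S t = c) : IsSol k a S := by
  have hm := tmin_eq a h0 hall
  exact ⟨0, Finset.mem_range.mpr (Nat.succ_pos k), t,
    Finset.mem_range.mpr (Nat.lt_succ_of_le htk), by omega,
    by rw [h0, hm], by rw [htt, hm]⟩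

lemma sol_exists {k : ℕ} (a : ℕ → ℤ) {j : ℕ} (hj1 : 1 ≤ j) (hjk : j ≤ k)
    (hja : a j - j ≤ a 0) : ∃ S : Set ℕ, S.Nonempty ∧ IsSol k a S := by
  classical
  set C : Finset ℕ := (Finset.Icc 1 k).filter (fun i => a i - i ≤ a 0) with hC
  have memC : ∀ i, i ∈ C ↔ (1 ≤ i ∧ i ≤ k ∧ a i - i ≤ a 0) := by
    intro i; simp [hC, Finset.mem_filter, Finset.mem_Icc, and_assoc]
  have hCne : C.Nonempty := ⟨j, (memC j).mpr ⟨hj1, hjk, hja⟩⟩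
  set j0 := C.min' hCne with hj0def
  have hj0C : j0 ∈ C := C.min'_mem hCne
  obtain ⟨hj01, hj0k, hj0a⟩ := (memC j0).mp hj0C
  have hmin : ∀ i, 1 ≤ i → i ≤ k → a i - i ≤ a 0 → j0 ≤ i := fun i h1 h2 h3 =>
    C.min'_le i ((memC i).mpr ⟨h1, h2, h3⟩)
  -- D i = a 0 - (a i - i), as a natural number (for candidates)
  set D : ℕ → ℕ := fun i => (a 0 - (a i - i)).toNat with hD
  have hDval : ∀ i, a i - i ≤ a 0 → (D i : ℤ) = a 0 - (a i - i) := by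
    intro i hi; simp only [hD]; omega
  rcases eq_or_lt_of_le hj0a with heq | hlt
  · -- case a j0 - j0 = a 0 : take S = {j0}
    refine ⟨{j0}, ⟨j0, rfl⟩, ?_⟩
    have key : ∀ i, i ≤ k → i ≤ j0 → (a 0 : ℤ) ≤ a i - i := by
      intro i hik hij0
      rcases Nat.eq_zero_or_pos i with h0 | h1
      · subst h0; simp
      · by_contra h
        have h2 := hmin i h1 hik (by omega)
        have h3 : i = j0 := le_antisymm hij0 h2
        subst h3; omega
    have hvle : ∀ i, i ≤ j0 → tval {j0} i = (((j0 - i : ℕ) : ℝ) : EReal) := by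
      intro i hij
      refine tval_eq ?_ ?_
      · show i + (j0 - i) ∈ ({j0} : Set ℕ)
        simp only [Set.mem_singleton_iff]; omega
      · intro d hd
        simp only [Set.mem_singleton_iff] at hd; omega
    have h0 : tterm a {j0} 0 = (((a 0 : ℝ) + (j0 : ℝ) : ℝ) : EReal) := by
      rw [tterm_eq a (hvle 0 (Nat.zero_le _))]; norm_num
    refine isSol_of a h0 ?_ hj01 hj0k ?_
    · intro i hik
      rcases le_or_gt i j0 with hij | hij
      · rw [tterm_eq a (hvle i hij)]
        apply EReal.coe_le_coe_iff.mpr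
        have hz := key i hik hij
        have hc : ((j0 - i : ℕ) : ℝ) = (j0 : ℝ) - (i : ℝ) := by
          push_cast [Nat.cast_sub hij]; ring
        rw [hc]
        have : (a 0 : ℝ) ≤ (a i : ℝ) - (i : ℝ) := by exact_mod_cast hz
        linarith
      · rw [tterm_top a (tval_top ?_)]
        · exact le_top
        · intro d hd
          simp only [Set.mem_singleton_iff] at hd; omega
    · rw [tterm_eq a (hvle j0 le_rfl)]
      have : (a j0 : ℝ) + ((j0 - j0 : ℕ) : ℝ) = (a 0 : ℝ) + (j0 : ℝ) := by
        have : (a j0 : ℝ) = (a 0 : ℝ) + (j0 : ℝ) := by exact_mod_cast (by omega : a j0 = a 0 + j0)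
        simp [this]
      rw [this]
  · -- case a j0 - j0 < a 0 : take S = {p, x}
    set p := j0 - 1 with hp
    have hj0p : j0 = p + 1 := by omega
    have hDj0 : 1 ≤ D j0 := by simp only [hD]; omega
    have hex : ∃ x, p + D j0 ≤ x ∧ ∀ i ∈ C, i ≤ x → p + D i ≤ x := by
      refine ⟨p + C.sup D, Nat.add_le_add_left (Finset.le_sup hj0C) p, ?_⟩
      intro i hi _; exact Nat.add_le_add_left (Finset.le_sup hi) p
    obtain ⟨x, ⟨hx1, hx2⟩, hxmin⟩ :
        ∃ x, (p + D j0 ≤ x ∧ ∀ i ∈ C, i ≤ x → p + D i ≤ x) ∧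
          ∀ y, y < x → ¬(p + D j0 ≤ y ∧ ∀ i ∈ C, i ≤ y → p + D i ≤ y) :=
      ⟨Nat.find hex, Nat.find_spec hex, fun y hy => Nat.find_min hex hy⟩
    have hpx : p < x := by omega
    -- there is an attainer t
    have hatt : ∃ t ∈ C, t ≤ x ∧ p + D t = x := by
      by_contra hno
      push_neg at hno
      have hxpos : 1 ≤ x := by omega
      have hP : p + D j0 ≤ x - 1 ∧ ∀ i ∈ C, i ≤ x - 1 → p + D i ≤ x - 1 := by
        constructor
        · have hne : p + D j0 ≠ x := by
            intro heq
            exact hno j0 hj0C (by omega) heq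
          omega
        · intro i hiC hix
          have h1 := hx2 i hiC (by omega)
          have h2 := hno i hiC (by omega)
          omega
      exact hxmin (x - 1) (by omega) hP
    obtain ⟨t, htC, htx, htD⟩ := hatt
    obtain ⟨ht1, htk, hta⟩ := (memC t).mp htC
    have htj0 : j0 ≤ t := hmin t ht1 htk hta
    refine ⟨{p, x}, ⟨p, Or.inl rfl⟩, ?_⟩
    have hv0 : tval {p, x} 0 = ((p : ℝ) : EReal) := by
      refine tval_eq ?_ ?_
      · show 0 + p ∈ ({p, x} : Set ℕ); simp
      · intro d hd
        simp only [Set.mem_insert_iff, Set.mem_singleton_iff] at hd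
        omega
    have hvlow : ∀ i, 1 ≤ i → i ≤ p → tval {p, x} i = (((p - i : ℕ) : ℝ) : EReal) := by
      intro i h1 h2
      refine tval_eq ?_ ?_
      · show i + (p - i) ∈ ({p, x} : Set ℕ)
        simp only [Set.mem_insert_iff, Set.mem_singleton_iff]
        omega
      · intro d hd
        simp only [Set.mem_insert_iff, Set.mem_singleton_iff] at hd
        omega
    have hvhigh : ∀ i, p < i → i ≤ x → tval {p, x} i = (((x - i : ℕ) : ℝ) : EReal) := by
      intro i h1 h2
      refine tval_eq ?_ ?_
      · show i + (x - i) ∈ ({p, x} : Set ℕ)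
        simp only [Set.mem_insert_iff, Set.mem_singleton_iff]
        omega
      · intro d hd
        simp only [Set.mem_insert_iff, Set.mem_singleton_iff] at hd
        omega
    have h0 : tterm a {p, x} 0 = (((a 0 : ℝ) + (p : ℝ) : ℝ) : EReal) := by
      rw [tterm_eq a hv0]
    refine isSol_of a h0 ?_ ht1 htk ?_
    · intro i hik
      rcases Nat.eq_zero_or_pos i with hi0 | hi1
      · subst hi0; rw [h0]
      · rcases le_or_gt i p with hip | hip
        · rw [tterm_eq a (hvlow i hi1 hip)]
          apply EReal.coe_le_coe_iff.mpr
          have hiC : i ∉ C := fun h => by have := C.min'_le i h; omega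
          have hz : a 0 < a i - i := by
            by_contra h
            exact hiC ((memC i).mpr ⟨hi1, by omega, by omega⟩)
          have hc : ((p - i : ℕ) : ℝ) = (p : ℝ) - (i : ℝ) := by
            push_cast [Nat.cast_sub hip]; ring
          rw [hc]
          have : (a 0 : ℝ) < (a i : ℝ) - (i : ℝ) := by exact_mod_cast hz
          linarith
        · rcases le_or_gt i x with hix | hix
          · rw [tterm_eq a (hvhigh i hip hix)]
            apply EReal.coe_le_coe_iff.mpr
            have hc : ((x - i : ℕ) : ℝ) = (x : ℝ) - (i : ℝ) := by
              push_cast [Nat.cast_sub hix]; ring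
            rw [hc]
            have hz : (a 0 : ℤ) + p ≤ a i + x - i := by
              rcases le_or_gt (a i - i) (a 0) with hcand | hcand
              · have hiC : i ∈ C := (memC i).mpr ⟨by omega, hik, hcand⟩
                have := hx2 i hiC hix
                have hd := hDval i hcand
                omega
              · omega
            have : (a 0 : ℝ) + (p : ℝ) ≤ (a i : ℝ) + (x : ℝ) - (i : ℝ) := by
              exact_mod_cast hz
            linarith
          · rw [tterm_top a (tval_top ?_)]
            · exact le_top
            · intro d hd
              simp only [Set.mem_insert_iff, Set.mem_singleton_iff] at hd
              omega
    · rw [tterm_eq a (hvhigh t (by omega) htx)]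
      apply congrArg
      have hd := hDval t hta
      have hz : (a t : ℤ) + (x - t : ℕ) = a 0 + p := by
        have hc : ((x - t : ℕ) : ℤ) = (x : ℤ) - t := by omega
        rw [hc]; omega
      exact_mod_cast hz

/-- no nonempty tropical solution iff `a_i - i > a_0` for `1 ≤ i ≤ k`. -/
theorem stmt6 (k : ℕ) (hk : 1 ≤ k) (a : ℕ → ℤ) :
    (¬ ∃ S : Set ℕ, S.Nonempty ∧ IsSol k a S) ↔
      ∀ i : ℕ, 1 ≤ i → i ≤ k → a 0 < a i - i := by
  constructor
  · intro hno i hi1 hik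
    by_contra hlt
    push_neg at hlt
    exact hno (sol_exists a hi1 hik hlt)
  · rintro hineq ⟨S, hne, i, hi, j, hj, hij, hie, hje⟩
    set m := sInf S with hm
    have hmS : m ∈ S := Nat.sInf_mem hne
    have hv0 : tval S 0 = ((m : ℝ) : EReal) := by
      refine tval_eq ?_ ?_
      · simpa using hmS
      · intro d hd; exact Nat.sInf_le (by simpa using hd)
    have h0 : tterm a S 0 = (((a 0 : ℝ) + (m : ℝ) : ℝ) : EReal) := by
      rw [tterm_eq a hv0]
    have hstrict : ∀ n, 1 ≤ n → n ≤ k → tterm a S 0 < tterm a S n := by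
      intro n h1 h2
      have hlow : ((((m : ℝ) - n : ℝ)) : EReal) ≤ tval S n := by
        apply le_tval
        intro d hd
        have : m ≤ n + d := Nat.sInf_le hd
        have : (m : ℝ) ≤ (n : ℝ) + (d : ℝ) := by exact_mod_cast this
        linarith
      have hchain : (((a n : ℝ) + ((m : ℝ) - n) : ℝ) : EReal) ≤ tterm a S n := by
        rw [tterm, EReal.coe_add]
        exact add_le_add_right hlow _
      refine lt_of_lt_of_le ?_ hchain
      rw [h0]
      apply EReal.coe_lt_coe_iff.mpr
      have hz := hineq n h1 h2
      have : (a 0 : ℝ) < (a n : ℝ) - (n : ℝ) := by exact_mod_cast hz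
      linarith
    have hminS : tmin k a S = tterm a S 0 := by
      refine tmin_eq a rfl ?_
      intro n hn
      rcases Nat.eq_zero_or_pos n with h | h
      · subst h; exact le_rfl
      · exact le_of_lt (hstrict n h hn)
    have hik : i ≤ k := Nat.lt_succ_iff.mp (Finset.mem_range.mp hi)
    have hjk : j ≤ k := Nat.lt_succ_iff.mp (Finset.mem_range.mp hj)
    rcases Nat.eq_zero_or_pos i with hi0 | hi0
    · have hj0 : 1 ≤ j := by omega
      have := hstrict j hj0 hjk
      rw [hje, hminS] at this
      exact lt_irrefl _ this
    · have := hstrict i hi0 hik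
      rw [hie, hminS] at this
      exact lt_irrefl _ this
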